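/- arXiv:2203.07355 — 3 statements merged into one kernel-verified Lean document; each statement's English description precedes it below -/
import Mathlib

section
/- Let 𝔽 be a field, let t and N be natural numbers with N ≥ 3t + 1, let x_1, …, x_N be distinct elements of 𝔽, and let y_1, …, y_N ∈ 𝔽. If p, q ∈ 𝔽[X] are polynomials of degree at most t such that p(x_i) ≠ y_i for at most t indices i ∈ {1, …, N} and q(x_i) ≠ y_i for at most t indices i ∈ {1, …, N}, then p = q. -/
open Polynomial
open scoped Classical

/-- Corollary 2 of the paper: with `N ≥ 3t+1` points of which at most `t` are erroneous,
a degree-at-most-`t` polynomial is uniquely determined. -/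
theorem reed_solomon_unique_decoding_of_three_t_plus_one
    (F : Type*) [Field F] (t N : ℕ) (hN : N ≥ 3 * t + 1)
    (x : Fin N → F) (hx : Function.Injective x) (y : Fin N → F)
    (p q : F[X]) (hp : p.degree ≤ t) (hq : q.degree ≤ t)
    (hpe : (Finset.univ.filter (fun i : Fin N => p.eval (x i) ≠ y i)).card ≤ t)
    (hqe : (Finset.univ.filter (fun i : Fin N => q.eval (x i) ≠ y i)).card ≤ t) :
    p = q := by
  set A := Finset.univ.filter (fun i : Fin N => p.eval (x i) ≠ y i)
  set B := Finset.univ.filter (fun i : Fin N => q.eval (x i) ≠ y i)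
  have hsub : (Finset.univ.filter (fun i : Fin N => (p - q).eval (x i) ≠ 0)) ⊆ A ∪ B := by
    intro i hi
    simp only [Finset.mem_filter, Finset.mem_univ, true_and, A, B, Finset.mem_union] at *
    by_contra h
    push_neg at h
    apply hi
    simp [Polynomial.eval_sub, h.1, h.2]
  set S := Finset.univ.filter (fun i : Fin N => (p - q).eval (x i) = 0)
  have hScard : N - 2 * t ≤ S.card := by
    have h1 : Sᶜ ⊆ A ∪ B := by
      intro i hi
      apply hsub
      simpa [S, Finset.mem_compl] using hi
    have h2 : Sᶜ.card ≤ 2 * t := by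
      calc Sᶜ.card ≤ (A ∪ B).card := Finset.card_le_card h1
        _ ≤ A.card + B.card := Finset.card_union_le _ _
        _ ≤ t + t := Nat.add_le_add hpe hqe
        _ = 2 * t := by ring
    have := Finset.card_compl (α := Fin N) S
    have hfc : Fintype.card (Fin N) = N := Fintype.card_fin N
    omega
  have hzero : p - q = 0 := by
    apply Polynomial.eq_zero_of_natDegree_lt_card_of_eval_eq_zero (p - q)
      (f := fun i : S => x i) (fun a b hab => Subtype.ext (hx hab))
      (fun i => by have := i.2; simpa [S] using this)
    have hd : (p - q).natDegree ≤ t := by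
      have := Polynomial.natDegree_sub_le p q
      have h1 : p.natDegree ≤ t := Polynomial.natDegree_le_iff_degree_le.mpr hp
      have h2 : q.natDegree ≤ t := Polynomial.natDegree_le_iff_degree_le.mpr hq
      omega
    have : Fintype.card S = S.card := Fintype.card_coe S
    omega
  exact sub_eq_zero.mp hzero
end

section
/- Let 𝔽 be a field, let t ≥ 1 be a natural number, let α_1, …, α_t be distinct nonzero elements of 𝔽, let A, B ∈ 𝔽[X] be polynomials of degree at most t, and let v_{i,j} ∈ 𝔽 for i, j ∈ {1, …, t} be arbitrary prescribed values. Then there exist polynomials O'_1, …, O'_t ∈ 𝔽[X], each of degree at most t, such that O'_i(α_j) = v_{i,j} for all i, j ∈ {1, …, t}, and the polynomial A(X)·B(X) − Σ_{i=1}^{t} X^i · O'_i(X) has degree at most t. -/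
open Polynomial

/-- Triangular cancellation: multiples of a monic degree-`t` polynomial `Z` shifted by
`X^(i+1)` can cancel all coefficients of degree exceeding `t` of any polynomial of
degree at most `2*t`. -/
lemma aux_cancel {F : Type*} [Field F] (t : ℕ) (Z : F[X]) (hZm : Z.Monic)
    (hZd : Z.natDegree = t) :
    ∀ n : ℕ, ∀ Q : F[X], Q.natDegree ≤ n → Q.degree ≤ 2 * t →
      ∃ c : Fin t → F,
        (Q - ∑ i : Fin t, C (c i) * X ^ ((i : ℕ) + 1) * Z).degree ≤ t := by
  intro n
  induction n with
  | zero =>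
    intro Q hQn hQ2t
    refine ⟨0, ?_⟩
    simp only [Pi.zero_apply, map_zero, zero_mul, Finset.sum_const_zero, sub_zero]
    calc Q.degree ≤ Q.natDegree := degree_le_natDegree
      _ ≤ (0 : ℕ) := by exact_mod_cast hQn
      _ ≤ (t : WithBot ℕ) := by exact_mod_cast Nat.zero_le t
  | succ n ih =>
    intro Q hQn hQ2t
    by_cases hQt : Q.degree ≤ t
    · refine ⟨0, ?_⟩
      simpa using hQt
    · push_neg at hQt
      have hQ0 : Q ≠ 0 := by
        intro h; rw [h, degree_zero] at hQt; exact (not_lt.2 bot_le) hQt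
      have hdeg : Q.degree = (Q.natDegree : WithBot ℕ) := degree_eq_natDegree hQ0
      have htd : t < Q.natDegree := by
        rw [hdeg] at hQt; exact_mod_cast hQt
      have hd2t : Q.natDegree ≤ 2 * t := by
        rw [hdeg] at hQ2t; exact_mod_cast hQ2t
      set d := Q.natDegree with hd
      have hit : d - t - 1 < t := by omega
      set i : Fin t := ⟨d - t - 1, hit⟩ with hi
      have hiv : (i : ℕ) + 1 + t = d := by simp [hi]; omega
      set T : F[X] := C Q.leadingCoeff * X ^ ((i : ℕ) + 1) * Z with hT
      have hlc : Q.leadingCoeff ≠ 0 := leadingCoeff_ne_zero.mpr hQ0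
      have hC : C Q.leadingCoeff ≠ 0 := by simpa using hlc
      have hX : (X : F[X]) ^ ((i : ℕ) + 1) ≠ 0 := pow_ne_zero _ X_ne_zero
      have hTd : T.natDegree = d := by
        rw [hT, natDegree_mul (mul_ne_zero hC hX) hZm.ne_zero, natDegree_mul hC hX,
          natDegree_C, natDegree_X_pow, hZd]
        omega
      have hT0 : T ≠ 0 := mul_ne_zero (mul_ne_zero hC hX) hZm.ne_zero
      have hTlc : T.leadingCoeff = Q.leadingCoeff := by
        rw [hT, leadingCoeff_mul, leadingCoeff_mul, leadingCoeff_C, leadingCoeff_X_pow,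
          hZm.leadingCoeff, mul_one, mul_one]
      have hQ'lt : (Q - T).degree < Q.degree := by
        apply degree_sub_lt _ hQ0 hTlc.symm
        rw [hdeg, degree_eq_natDegree hT0, hTd]
      have hQ'n : (Q - T).natDegree ≤ n := by
        by_cases h0 : Q - T = 0
        · simp [h0]
        · have := natDegree_lt_natDegree h0 hQ'lt
          omega
      have hQ'2t : (Q - T).degree ≤ 2 * t := le_trans (le_of_lt hQ'lt) (by exact_mod_cast hQ2t)
      obtain ⟨c', hc'⟩ := ih (Q - T) hQ'n hQ'2t
      set c : Fin t → F := fun j => c' j + if j = i then Q.leadingCoeff else 0 with hcdef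
      refine ⟨c, ?_⟩
      have hsum : ∑ j : Fin t, C (c j) * X ^ ((j : ℕ) + 1) * Z
          = (∑ j : Fin t, C (c' j) * X ^ ((j : ℕ) + 1) * Z) + T := by
        have hsingle : ∑ j : Fin t, C (if j = i then Q.leadingCoeff else 0) * X ^ ((j : ℕ) + 1) * Z
            = T := by
          rw [Finset.sum_eq_single i]
          · simp [hT]
          · intro j _ hj
            simp [hj]
          · simp
        rw [← hsingle, ← Finset.sum_add_distrib]
        refine Finset.sum_congr rfl fun j _ => ?_
        rw [hcdef]
        simp only [map_add]
        ring
      rw [hsum]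
      calc (Q - ((∑ j : Fin t, C (c' j) * X ^ ((j : ℕ) + 1) * Z) + T)).degree
          = ((Q - T) - ∑ j : Fin t, C (c' j) * X ^ ((j : ℕ) + 1) * Z).degree := by congr 1; ring
        _ ≤ t := hc'

/-- Privacy of the verification-of-product phase: the degree-reduction polynomials can be
chosen to match arbitrary prescribed values at the `t` adversarial evaluation points. -/
theorem exists_degree_reduction_polynomials_with_prescribed_values
    (F : Type*) [Field F] (t : ℕ) (ht : 1 ≤ t)
    (α : Fin t → F) (hα : Function.Injective α) (hα0 : ∀ i, α i ≠ 0)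
    (A B : F[X]) (hA : A.degree ≤ t) (hB : B.degree ≤ t)
    (v : Fin t → Fin t → F) :
    ∃ O' : Fin t → F[X],
      (∀ i, (O' i).degree ≤ t) ∧
      (∀ i j, (O' i).eval (α j) = v i j) ∧
      (A * B - ∑ i : Fin t, X ^ ((i : ℕ) + 1) * O' i).degree ≤ t := by
  set Z : F[X] := ∏ j : Fin t, (X - C (α j)) with hZ
  have hZm : Z.Monic := monic_prod_of_monic _ _ fun j _ => monic_X_sub_C _
  have hZd : Z.natDegree = t := by
    rw [hZ, natDegree_prod _ _ fun j _ => X_sub_C_ne_zero (α j)]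
    simp
  have hZeval : ∀ j, Z.eval (α j) = 0 := by
    intro j
    rw [hZ, eval_prod]
    exact Finset.prod_eq_zero (Finset.mem_univ j) (by simp)
  have hαinj : Set.InjOn α ↑(Finset.univ : Finset (Fin t)) := hα.injOn
  set R : Fin t → F[X] := fun i => Lagrange.interpolate Finset.univ α (v i) with hR
  have hReval : ∀ i j, (R i).eval (α j) = v i j := fun i j =>
    Lagrange.eval_interpolate_at_node _ hαinj (Finset.mem_univ j)
  have hRdeg : ∀ i, (R i).degree < t := by
    intro i
    have h := Lagrange.degree_interpolate_lt (v i) hαinj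
    rw [Finset.card_univ, Fintype.card_fin] at h; exact h
  set Q : F[X] := A * B - ∑ i : Fin t, X ^ ((i : ℕ) + 1) * R i with hQ
  have hQ2t : Q.degree ≤ 2 * t := by
    apply le_trans (degree_sub_le _ _)
    apply max_le
    · apply le_trans (degree_mul_le _ _)
      calc A.degree + B.degree ≤ (t : WithBot ℕ) + t := add_le_add hA hB
        _ = ((2 * t : ℕ) : WithBot ℕ) := by push_cast; ring
    · apply le_trans (degree_sum_le _ _)
      apply Finset.sup_le
      intro i _
      apply le_trans (degree_mul_le _ _)
      rw [degree_X_pow]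
      rcases eq_or_ne (R i) 0 with h0 | h0
      · simp [h0]
      · have hRn : (R i).natDegree ≤ t - 1 := by
          have := hRdeg i
          rw [degree_eq_natDegree h0] at this
          have : (R i).natDegree < t := by exact_mod_cast this
          omega
        calc ((i : ℕ) + 1 : WithBot ℕ) + (R i).degree
            ≤ ((i : ℕ) + 1 : ℕ) + ((R i).natDegree : WithBot ℕ) := by
              rw [degree_eq_natDegree h0]
              push_cast
              exact le_refl _
          _ = (((i : ℕ) + 1 + (R i).natDegree : ℕ) : WithBot ℕ) := by push_cast; ring
          _ ≤ ((2 * t : ℕ) : WithBot ℕ) := by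
              have : (i : ℕ) < t := i.isLt
              exact_mod_cast (by omega : (i : ℕ) + 1 + (R i).natDegree ≤ 2 * t)
  obtain ⟨c, hc⟩ := aux_cancel t Z hZm hZd Q.natDegree Q le_rfl hQ2t
  refine ⟨fun i => R i + C (c i) * Z, ?_, ?_, ?_⟩
  · intro i
    apply le_trans (degree_add_le _ _)
    apply max_le (le_of_lt (hRdeg i))
    apply le_trans (degree_mul_le _ _)
    rw [degree_eq_natDegree hZm.ne_zero, hZd]
    refine le_trans (add_le_add_left degree_C_le _) ?_
    simp
  · intro i j
    simp [hReval i j, hZeval j]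
  · have hrw : A * B - ∑ i : Fin t, X ^ ((i : ℕ) + 1) * (R i + C (c i) * Z)
        = Q - ∑ i : Fin t, C (c i) * X ^ ((i : ℕ) + 1) * Z := by
      rw [hQ]
      rw [show ∑ i : Fin t, X ^ ((i : ℕ) + 1) * (R i + C (c i) * Z)
          = (∑ i : Fin t, X ^ ((i : ℕ) + 1) * R i)
            + ∑ i : Fin t, C (c i) * X ^ ((i : ℕ) + 1) * Z by
        rw [← Finset.sum_add_distrib]; congr 1; ext i; ring]
      ring
    rw [hrw]
    exact hc
end

section
/- Let 𝔽 be a field, let t ≥ 1 be a natural number, let α_1, …, α_t be distinct nonzero elements of 𝔽, and let F_0, F_1, G_0, G_1 ∈ 𝔽[X] be polynomials of degree at most t such that F_0(0) = 0, F_1(0) = 1, G_0(0) = 0, G_1(0) = 1, and F_0(α_l) = F_1(α_l) and G_0(α_l) = G_1(α_l) for every l ∈ {1, …, t}. Then G_1 + F_0 = G_0 + F_1 as polynomials. -/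
open Polynomial

/-- Privacy of the counting step: for polynomials of degree at most `t` with constant
terms `0` and `1` respectively, agreeing pairwise at the `t` adversarial points,
`G_1 + F_0 = G_0 + F_1`. -/
theorem counting_privacy
    (F : Type*) [Field F] (t : ℕ) (ht : 1 ≤ t)
    (α : Fin t → F) (hα : Function.Injective α) (hα0 : ∀ i, α i ≠ 0)
    (F0 F1 G0 G1 : F[X])
    (hF0 : F0.degree ≤ t) (hF1 : F1.degree ≤ t)
    (hG0 : G0.degree ≤ t) (hG1 : G1.degree ≤ t)
    (hF00 : F0.eval 0 = 0) (hF10 : F1.eval 0 = 1)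
    (hG00 : G0.eval 0 = 0) (hG10 : G1.eval 0 = 1)
    (hFagree : ∀ l, F0.eval (α l) = F1.eval (α l))
    (hGagree : ∀ l, G0.eval (α l) = G1.eval (α l)) :
    G1 + F0 = G0 + F1 := by
  set P : F[X] := G1 + F0 - (G0 + F1) with hP
  have hdeg : P.degree ≤ t := by
    apply le_trans (Polynomial.degree_sub_le _ _)
    simp only [max_le_iff]
    constructor
    · exact le_trans (Polynomial.degree_add_le _ _) (max_le hG1 hF0)
    · exact le_trans (Polynomial.degree_add_le _ _) (max_le hG0 hF1)
  have hndeg : P.natDegree ≤ t := Polynomial.natDegree_le_iff_degree_le.2 hdeg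
  have hzero : P = 0 := by
    apply Polynomial.eq_zero_of_natDegree_lt_card_of_eval_eq_zero P
      (f := fun i : Option (Fin t) => i.elim 0 α)
    · rintro (_|i) (_|j) h
      · rfl
      · exact absurd h.symm (hα0 j)
      · exact absurd h (hα0 i)
      · simp only [Option.elim] at h
        exact congrArg some (hα h)
    · rintro (_|i) <;> simp [hP, hF00, hG00, hF10, hG10, hFagree, hGagree]
    · simpa using Nat.lt_succ_of_le hndeg
  exact sub_eq_zero.mp hzero
end
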